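/- For every integer n ≥ 1 and every real b > 3√3/2 there exists a constant M > 0 such that for every integer g ≥ 0 with 2g−2+n ≥ 1: (3g−3+2n)!/(g!·n!) ≤ M · b^{2g−2+n} · Γ(2g−2+n), where Γ denotes the Gamma function. -/

import Mathlib

open Filter Topology

/-- `(a+m)! ≤ a! * (a+m)^m`. -/
lemma fact_add_le_aux (a : ℕ) : ∀ m : ℕ, (a + m).factorial ≤ a.factorial * (a + m) ^ m := by
  intro m
  induction m with
  | zero => simp
  | succ k ih =>
    have h1 : (a + (k + 1)).factorial = (a + k + 1) * (a + k).factorial := by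
      rw [← Nat.add_assoc]; exact Nat.factorial_succ _
    have h2 : a + (k + 1) = a + k + 1 := by omega
    rw [h1, h2]
    calc (a + k + 1) * (a + k).factorial
        ≤ (a + k + 1) * (a.factorial * (a + k) ^ k) := Nat.mul_le_mul_left _ ih
      _ ≤ (a + k + 1) * (a.factorial * (a + k + 1) ^ k) := by
          exact Nat.mul_le_mul_left _ (Nat.mul_le_mul_left _
            (Nat.pow_le_pow_left (Nat.le_succ _) k))
      _ = a.factorial * (a + k + 1) ^ (k + 1) := by ring

/-- `4^m (3m)! ≤ 27^m m! (2m)!`. -/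
lemma key_fact_aux : ∀ m : ℕ,
    4 ^ m * (3 * m).factorial ≤ 27 ^ m * m.factorial * (2 * m).factorial := by
  intro m
  induction m with
  | zero => simp
  | succ k ih =>
    have e1 : 3 * (k + 1) = 3 * k + 2 + 1 := by ring
    have e2 : 2 * (k + 1) = 2 * k + 1 + 1 := by ring
    have lhs_eq : 4 ^ (k + 1) * (3 * (k + 1)).factorial
        = (4 * ((3 * k + 3) * ((3 * k + 2) * (3 * k + 1)))) * (4 ^ k * (3 * k).factorial) := by
      rw [e1, Nat.factorial_succ, Nat.factorial_succ, Nat.factorial_succ]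
      ring
    have rhs_eq : 27 ^ (k + 1) * (k + 1).factorial * (2 * (k + 1)).factorial
        = (27 * ((k + 1) * ((2 * k + 2) * (2 * k + 1))))
          * (27 ^ k * k.factorial * (2 * k).factorial) := by
      rw [e2, Nat.factorial_succ, Nat.factorial_succ, Nat.factorial_succ]
      ring
    rw [lhs_eq, rhs_eq]
    have hcoef : 4 * ((3 * k + 3) * ((3 * k + 2) * (3 * k + 1)))
        ≤ 27 * ((k + 1) * ((2 * k + 2) * (2 * k + 1))) := by nlinarith [Nat.zero_le k]
    exact Nat.mul_le_mul hcoef ih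

/-- Stirling-type inequality `(3g-3+2n)!/(g! n!) ≤ M b^{2g-2+n} Γ(2g-2+n)`
for fixed `n ≥ 1` and any base `b > 3√3/2`. -/
theorem stmt_15 (n : ℕ) (hn : 1 ≤ n) (b : ℝ) (hb : 3 * Real.sqrt 3 / 2 < b) :
    ∃ M : ℝ, 0 < M ∧
      ∀ g : ℕ, 3 ≤ 2 * g + n →
        (Nat.factorial (3 * g + 2 * n - 3) : ℝ) /
            ((Nat.factorial g : ℝ) * (Nat.factorial n : ℝ))
          ≤ M * b ^ (2 * g + n - 2) * Real.Gamma (2 * (g : ℝ) - 2 + n) := by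
  have hsq : Real.sqrt 3 ^ 2 = 3 := Real.sq_sqrt (by norm_num)
  have hsqnn : 0 ≤ Real.sqrt 3 := Real.sqrt_nonneg 3
  have hsqpos : 0 < Real.sqrt 3 := by nlinarith
  have hb0 : (0 : ℝ) < b := lt_trans (by positivity) hb
  have hb2 : (27 : ℝ) / 4 < b ^ 2 := by nlinarith
  set r : ℝ := 27 / (4 * b ^ 2) with hrdef
  have hr0 : 0 ≤ r := by positivity
  have hr1 : r < 1 := by
    rw [hrdef, div_lt_one (by positivity)]; linarith
  have hrnorm : ‖r‖ < 1 := by rwa [Real.norm_eq_abs, abs_of_nonneg hr0]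
  have htend : Tendsto (fun m : ℕ => (m : ℝ) ^ (2 * n + 3) * r ^ m) atTop (𝓝 0) :=
    (summable_pow_mul_geometric_of_norm_lt_one (2 * n + 3) hrnorm).tendsto_atTop_zero
  obtain ⟨M0, hM0⟩ := htend.bddAbove_range
  have hM0_mem : ∀ m : ℕ, (m : ℝ) ^ (2 * n + 3) * r ^ m ≤ M0 := fun m =>
    hM0 (Set.mem_range_self m)
  have hM00 : 0 ≤ M0 := le_trans (by simp) (hM0_mem 0)
  have hnfac : (0 : ℝ) < (Nat.factorial n : ℝ) := by positivity
  refine ⟨(M0 + 1) * 2 ^ (n + 3) * b ^ (n + 2) / (Nat.factorial n : ℝ), by positivity, ?_⟩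
  intro g hg
  set m := g + n with hm
  -- Gamma value
  have hΓ : Real.Gamma (2 * (g : ℝ) - 2 + n) = (Nat.factorial (2 * g + n - 3) : ℝ) := by
    have e : (2 * (g : ℝ) - 2 + n) = ((2 * g + n - 3 : ℕ) : ℝ) + 1 := by
      rw [Nat.cast_sub hg]
      push_cast
      ring
    rw [e, Real.Gamma_nat_eq_factorial]
  rw [hΓ]
  -- Natural number factorial chain
  have step1 : (3 * g + 2 * n - 3).factorial ≤ (3 * m).factorial :=
    Nat.factorial_le (by omega)
  have step2 := key_fact_aux m
  have step3 : m.factorial ≤ g.factorial * m ^ n := fact_add_le_aux g n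
  have step4 : (2 * m).factorial ≤ (2 * g + n - 3).factorial * (2 * m) ^ (n + 3) := by
    have h := fact_add_le_aux (2 * g + n - 3) (n + 3)
    have e : 2 * g + n - 3 + (n + 3) = 2 * m := by omega
    rwa [e] at h
  have hnat : 4 ^ m * (3 * g + 2 * n - 3).factorial
      ≤ 27 ^ m * (g.factorial * m ^ n) * ((2 * g + n - 3).factorial * (2 * m) ^ (n + 3)) := by
    calc 4 ^ m * (3 * g + 2 * n - 3).factorial
        ≤ 4 ^ m * (3 * m).factorial := Nat.mul_le_mul_left _ step1
      _ ≤ 27 ^ m * m.factorial * (2 * m).factorial := step2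
      _ ≤ 27 ^ m * (g.factorial * m ^ n) * ((2 * g + n - 3).factorial * (2 * m) ^ (n + 3)) :=
          Nat.mul_le_mul (Nat.mul_le_mul_left _ step3) step4
  have hreal : (4 : ℝ) ^ m * ((3 * g + 2 * n - 3).factorial : ℝ)
      ≤ (27 : ℝ) ^ m * ((g.factorial : ℝ) * (m : ℝ) ^ n)
        * (((2 * g + n - 3).factorial : ℝ) * (2 * (m : ℝ)) ^ (n + 3)) := by
    exact_mod_cast hnat
  -- key analytic bound
  have e27 : (27 : ℝ) = r * 4 * b ^ 2 := by
    rw [hrdef]; field_simp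
  have em : (m : ℝ) ^ n * (2 * (m : ℝ)) ^ (n + 3)
      = 2 ^ (n + 3) * (m : ℝ) ^ (2 * n + 3) := by
    rw [mul_pow, ← mul_assoc, mul_comm ((m:ℝ)^n), mul_assoc, ← pow_add]
    congr 2
    omega
  have hfin : (m : ℝ) ^ (2 * n + 3) * r ^ m ≤ M0 + 1 := by
    have := hM0_mem m; linarith
  have hpow' : (27 : ℝ) ^ m * ((m : ℝ) ^ n * (2 * (m : ℝ)) ^ (n + 3))
      ≤ (M0 + 1) * 2 ^ (n + 3) * b ^ (2 * m) * 4 ^ m := by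
    calc (27 : ℝ) ^ m * ((m : ℝ) ^ n * (2 * (m : ℝ)) ^ (n + 3))
        = ((m : ℝ) ^ (2 * n + 3) * r ^ m) * 2 ^ (n + 3) * (b ^ 2) ^ m * 4 ^ m := by
          rw [em, e27, mul_pow, mul_pow]; ring
      _ = ((m : ℝ) ^ (2 * n + 3) * r ^ m) * 2 ^ (n + 3) * b ^ (2 * m) * 4 ^ m := by
          rw [← pow_mul]
      _ ≤ (M0 + 1) * 2 ^ (n + 3) * b ^ (2 * m) * 4 ^ m := by
          gcongr
  have hexp : b ^ (2 * m) = b ^ (2 * g + n - 2) * b ^ (n + 2) := by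
    rw [← pow_add]
    congr 1
    omega
  set M : ℝ := (M0 + 1) * 2 ^ (n + 3) * b ^ (n + 2) / (Nat.factorial n : ℝ) with hMdef
  have hMN : M * (Nat.factorial n : ℝ) = (M0 + 1) * 2 ^ (n + 3) * b ^ (n + 2) := by
    rw [hMdef]; field_simp
  rw [div_le_iff₀ (by positivity)]
  -- goal : A ≤ M * b^(2g+n-2) * K * (G * N)
  have hcancel : (4 : ℝ) ^ m * ((3 * g + 2 * n - 3).factorial : ℝ)
      ≤ (4 : ℝ) ^ m * (M * b ^ (2 * g + n - 2) * ((2 * g + n - 3).factorial : ℝ)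
          * ((g.factorial : ℝ) * (Nat.factorial n : ℝ))) := by
    calc (4 : ℝ) ^ m * ((3 * g + 2 * n - 3).factorial : ℝ)
        ≤ (27 : ℝ) ^ m * ((g.factorial : ℝ) * (m : ℝ) ^ n)
          * (((2 * g + n - 3).factorial : ℝ) * (2 * (m : ℝ)) ^ (n + 3)) := hreal
      _ = ((27 : ℝ) ^ m * ((m : ℝ) ^ n * (2 * (m : ℝ)) ^ (n + 3)))
          * ((g.factorial : ℝ) * ((2 * g + n - 3).factorial : ℝ)) := by ring
      _ ≤ ((M0 + 1) * 2 ^ (n + 3) * b ^ (2 * m) * 4 ^ m)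
          * ((g.factorial : ℝ) * ((2 * g + n - 3).factorial : ℝ)) := by
          gcongr
      _ = (4 : ℝ) ^ m * ((M * (Nat.factorial n : ℝ)) * b ^ (2 * g + n - 2)
          * ((g.factorial : ℝ) * ((2 * g + n - 3).factorial : ℝ))) := by
          rw [hMN, hexp]; ring
      _ = (4 : ℝ) ^ m * (M * b ^ (2 * g + n - 2) * ((2 * g + n - 3).factorial : ℝ)
          * ((g.factorial : ℝ) * (Nat.factorial n : ℝ))) := by ring
  exact le_of_mul_le_mul_left hcancel (by positivity)
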